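/- Let M be the one-level reconstruction operator: for a coarse sequence c : ℤ → ℝ and details d : ℤ → ℝ, M(c,d)_{2i} = c_i and M(c,d)_{2i+1} = d_i + ( -(1/16)c_{i-1} + (9/16)c_i + (9/16)c_{i+1} - (1/16)c_{i+2} ). Suppose bounded sequences satisfy u^{j+1} = M(u^j, d^j) and û^{j+1} = M(û^j, d̂^j) for j = 0, …, J-1, with û^0 = u^0 and sup_i |d̂^j_i - d^j_i| ≤ ε for every j. Then sup_i |û^J_i - u^J_i| ≤ 4ε·((5/4)^J − 1). -/
import Mathlib


/-- Fourth-order Deslauriers–Dubuc prediction of the odd-indexed value from a coarse sequence. -/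
noncomputable def ddPredict (c : ℤ → ℝ) (i : ℤ) : ℝ :=
  -(1/16) * c (i - 1) + (9/16) * c i + (9/16) * c (i + 1) - (1/16) * c (i + 2)

/-- One-level reconstruction operator from a coarse sequence and detail coefficients. -/
noncomputable def mrReconstruct (c d : ℤ → ℝ) : ℤ → ℝ := fun n =>
  if 2 ∣ n then c (n / 2) else d ((n - 1) / 2) + ddPredict c ((n - 1) / 2)

lemma one_level_err (c c' d d' : ℤ → ℝ) (B ε : ℝ) (hB : 0 ≤ B)
    (hc : ∀ i, |c' i - c i| ≤ B) (hd : ∀ i, |d' i - d i| ≤ ε) :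
    ∀ n, |mrReconstruct c' d' n - mrReconstruct c d n| ≤ (5/4) * B + ε := by
  have hε : 0 ≤ ε := le_trans (abs_nonneg _) (hd 0)
  intro n
  unfold mrReconstruct
  by_cases h : 2 ∣ n
  · simp only [h, if_true]
    calc |c' (n/2) - c (n/2)| ≤ B := hc _
      _ ≤ (5/4) * B + ε := by nlinarith
  · simp only [h, if_false]
    set i := (n - 1) / 2
    have key : |d' i + ddPredict c' i - (d i + ddPredict c i)|
        ≤ |d' i - d i| + (1/16) * |c' (i-1) - c (i-1)| + (9/16) * |c' i - c i|
          + (9/16) * |c' (i+1) - c (i+1)| + (1/16) * |c' (i+2) - c (i+2)| := by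
      have : d' i + ddPredict c' i - (d i + ddPredict c i)
          = (d' i - d i) + -(1/16 * (c' (i-1) - c (i-1))) + (9/16) * (c' i - c i)
            + (9/16) * (c' (i+1) - c (i+1)) + -(1/16 * (c' (i+2) - c (i+2))) := by
        simp [ddPredict]; ring
      rw [this]
      have h1 := abs_add_le ((d' i - d i) + -(1/16 * (c' (i-1) - c (i-1))) + (9/16) * (c' i - c i)
            + (9/16) * (c' (i+1) - c (i+1))) (-(1/16 * (c' (i+2) - c (i+2))))
      have h2 := abs_add_le ((d' i - d i) + -(1/16 * (c' (i-1) - c (i-1))) + (9/16) * (c' i - c i))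
            ((9/16) * (c' (i+1) - c (i+1)))
      have h3 := abs_add_le ((d' i - d i) + -(1/16 * (c' (i-1) - c (i-1))))
            ((9/16) * (c' i - c i))
      have h4 := abs_add_le (d' i - d i) (-(1/16 * (c' (i-1) - c (i-1))))
      simp only [abs_neg, abs_mul, abs_of_nonneg (by norm_num : (0:ℝ) ≤ 1/16),
        abs_of_nonneg (by norm_num : (0:ℝ) ≤ 9/16)] at h1 h2 h3 h4
      linarith
    calc |d' i + ddPredict c' i - (d i + ddPredict c i)|
        ≤ |d' i - d i| + (1/16) * |c' (i-1) - c (i-1)| + (9/16) * |c' i - c i|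
          + (9/16) * |c' (i+1) - c (i+1)| + (1/16) * |c' (i+2) - c (i+2)| := key
      _ ≤ ε + (1/16) * B + (9/16) * B + (9/16) * B + (1/16) * B := by
          have := hc (i-1); have := hc i; have := hc (i+1); have := hc (i+2); have := hd i
          nlinarith
      _ = (5/4) * B + ε := by ring

/-- Multilevel stability of the reconstruction under perturbation of the detail
coefficients: if the details are perturbed by at most `ε` on each of `J` levels,
the reconstructed sequences differ by at most `4ε((5/4)^J − 1)` in sup norm. -/
theorem multilevel_thresholding_error
    (J : ℕ) (ε : ℝ) (hε : 0 ≤ ε)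
    (u uh : ℕ → ℤ → ℝ) (d dh : ℕ → ℤ → ℝ)
    (hbdd_u : ∀ j : ℕ, ∃ B : ℝ, ∀ i : ℤ, |u j i| ≤ B)
    (hbdd_uh : ∀ j : ℕ, ∃ B : ℝ, ∀ i : ℤ, |uh j i| ≤ B)
    (hrec : ∀ j : ℕ, j < J → u (j + 1) = mrReconstruct (u j) (d j))
    (hrec' : ∀ j : ℕ, j < J → uh (j + 1) = mrReconstruct (uh j) (dh j))
    (h0 : uh 0 = u 0)
    (hd : ∀ j : ℕ, j < J → ∀ i : ℤ, |dh j i - d j i| ≤ ε) :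
    ∀ i : ℤ, |uh J i - u J i| ≤ 4 * ε * ((5/4 : ℝ) ^ J - 1) := by
  suffices h : ∀ j : ℕ, j ≤ J → ∀ i : ℤ, |uh j i - u j i| ≤ 4 * ε * ((5/4 : ℝ) ^ j - 1) from
    h J le_rfl
  intro j
  induction j with
  | zero => intro _ i; simp [h0]
  | succ j ih =>
    intro hj i
    have hjJ : j < J := hj
    have ihb := ih (le_of_lt hjJ)
    have hBnn : 0 ≤ 4 * ε * ((5/4 : ℝ) ^ j - 1) := by
      have : (1:ℝ) ≤ (5/4 : ℝ) ^ j := one_le_pow₀ (by norm_num)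
      nlinarith
    have step := one_level_err (u j) (uh j) (d j) (dh j) _ ε hBnn ihb (hd j hjJ) i
    rw [hrec j hjJ, hrec' j hjJ]
    calc |mrReconstruct (uh j) (dh j) i - mrReconstruct (u j) (d j) i|
        ≤ (5/4) * (4 * ε * ((5/4 : ℝ) ^ j - 1)) + ε := step
      _ = 4 * ε * ((5/4 : ℝ) ^ (j+1) - 1) := by ring
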